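/- arXiv:2504.17176 — 2 statements merged into one kernel-verified Lean document; each statement's English description precedes it below -/
import Mathlib

section
/- (Integration-by-parts/telescoping identity.) Let g : [0,Δ] → ℝ be continuously differentiable with bounded derivative, and define σ(x) := 1 if x mod 2Δ < Δ and σ(x) := −1 otherwise. Then both integrals below converge absolutely and ∫_0^∞ a S e^{Sx} s · g(|x mod 2Δ − Δ|) dx = −(a s) · g(Δ) + ∫_0^∞ σ(x) · a e^{Sx} s · g'(|x mod 2Δ − Δ|) dx. -/
open MeasureTheory Matrix

attribute [local instance] Matrix.normedAddCommGroup Matrix.normedSpace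

/-- `e^{xS}` : the matrix exponential of `x • S`. -/
noncomputable def mexp {p : ℕ} (S : Matrix (Fin p) (Fin p) ℝ) (x : ℝ) :
    Matrix (Fin p) (Fin p) ℝ := NormedSpace.exp (x • S)

/-- The representative of `x` modulo `2Δ` lying in `[0, 2Δ)`. -/
noncomputable def rmod (Δ x : ℝ) : ℝ := 2 * Δ * Int.fract (x / (2 * Δ))



/-! ### Auxiliary definitions -/

/-- The bilinear form `c e^{xS} s`. -/
noncomputable def fb {p : ℕ} (S : Matrix (Fin p) (Fin p) ℝ) (c s : Fin p → ℝ) (x : ℝ) : ℝ :=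
  (c ᵥ* mexp S x) ⬝ᵥ s

/-- The triangle wave `|x mod 2Δ - Δ|`. -/
noncomputable def tri (Δ x : ℝ) : ℝ := |rmod Δ x - Δ|

/-- The square wave `σ`. -/
noncomputable def sg (Δ x : ℝ) : ℝ := if rmod Δ x < Δ then 1 else -1

/-- Clamping to `[0, Δ]`. -/
noncomputable def clamp (Δ y : ℝ) : ℝ := min Δ (max 0 y)

/-- `g` precomposed with clamping and the triangle wave. -/
noncomputable def cext (g : ℝ → ℝ) (Δ x : ℝ) : ℝ := g (clamp Δ (tri Δ x))

/-! ### Lemmas about `fb` -/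

lemma fbil_hasDerivAt {p : ℕ} (S : Matrix (Fin p) (Fin p) ℝ) (c s : Fin p → ℝ) (x : ℝ) :
    HasDerivAt (fb S c s) (fb S (c ᵥ* S) s x) x := by
  letI : SeminormedRing (Matrix (Fin p) (Fin p) ℝ) := Matrix.linftyOpSemiNormedRing
  letI : NormedRing (Matrix (Fin p) (Fin p) ℝ) := Matrix.linftyOpNormedRing
  letI : NormedAlgebra ℝ (Matrix (Fin p) (Fin p) ℝ) := Matrix.linftyOpNormedAlgebra
  letI : NormedAddCommGroup (Matrix (Fin p) (Fin p) ℝ) := NonUnitalNormedRing.toNormedAddCommGroup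
  letI : NormedSpace ℝ (Matrix (Fin p) (Fin p) ℝ) := NormedAlgebra.toNormedSpace _
  letI : CompleteSpace (Matrix (Fin p) (Fin p) ℝ) := FiniteDimensional.complete ℝ _
  let L : Matrix (Fin p) (Fin p) ℝ →ₗ[ℝ] ℝ :=
    { toFun := fun M => (c ᵥ* M) ⬝ᵥ s
      map_add' := fun M N => by
        simp [Matrix.vecMul_add, add_dotProduct]
      map_smul' := fun r M => by
        have h : c ᵥ* (r • M) = r • (c ᵥ* M) := by
          ext j
          simp [Matrix.vecMul, dotProduct, Finset.mul_sum]
          exact Finset.sum_congr rfl fun i _ => by ring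
        show c ᵥ* (r • M) ⬝ᵥ s = (RingHom.id ℝ) r • (c ᵥ* M ⬝ᵥ s)
        rw [h, smul_dotProduct]
        simp }
  have h1 := hasDerivAt_exp_smul_const' S x
  have h2 := (L.toContinuousLinearMap.hasFDerivAt).comp_hasDerivAt x h1
  have h3 : (c ᵥ* (S * mexp S x)) ⬝ᵥ s = ((c ᵥ* S) ᵥ* mexp S x) ⬝ᵥ s := by
    rw [Matrix.vecMul_vecMul]
  have h4 : (L.toContinuousLinearMap) (S * NormedSpace.exp (x • S)) = fb S (c ᵥ* S) s x := by
    show (c ᵥ* (S * mexp S x)) ⬝ᵥ s = _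
    rw [h3]; rfl
  rw [← h4]; exact h2

lemma fb_continuous {p : ℕ} (S : Matrix (Fin p) (Fin p) ℝ) (c s : Fin p → ℝ) :
    Continuous (fb S c s) :=
  continuous_iff_continuousAt.2 fun x => (fbil_hasDerivAt S c s x).continuousAt

lemma fb_bound {p : ℕ} (S : Matrix (Fin p) (Fin p) ℝ) (c s : Fin p → ℝ) (x : ℝ) :
    |fb S c s x| ≤ (∑ i, |c i|) * (∑ j, |s j|) * ‖mexp S x‖ := by
  set M := mexp S x with hMdef
  have hM : ∀ i j, |M i j| ≤ ‖M‖ := fun i j => M.norm_entry_le_entrywise_sup_norm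
  calc |(c ᵥ* M) ⬝ᵥ s| = |∑ j, (∑ i, c i * M i j) * s j| := by
        simp [Matrix.vecMul, dotProduct]
    _ ≤ ∑ j, |(∑ i, c i * M i j) * s j| := Finset.abs_sum_le_sum_abs _ _
    _ ≤ ∑ j, (∑ i, |c i| * ‖M‖) * |s j| := by
        refine Finset.sum_le_sum fun j _ => ?_
        rw [abs_mul]
        refine mul_le_mul_of_nonneg_right ?_ (abs_nonneg _)
        refine le_trans (Finset.abs_sum_le_sum_abs _ _) (Finset.sum_le_sum fun i _ => ?_)
        rw [abs_mul]
        exact mul_le_mul_of_nonneg_left (hM i j) (abs_nonneg _)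
    _ = (∑ i, |c i|) * (∑ j, |s j|) * ‖M‖ := by
        rw [← Finset.sum_mul, ← Finset.mul_sum]; ring

lemma mexp_zero {p : ℕ} (S : Matrix (Fin p) (Fin p) ℝ) : mexp S 0 = 1 := by
  rw [mexp, zero_smul, NormedSpace.exp_zero]

lemma fb_zero {p : ℕ} (S : Matrix (Fin p) (Fin p) ℝ) (a s : Fin p → ℝ) :
    fb S a s 0 = a ⬝ᵥ s := by
  rw [fb, mexp_zero, Matrix.vecMul_one]

/-! ### Lemmas about `rmod`, `tri`, `sg`, `clamp` -/

lemma rmod_eq_sub {Δ : ℝ} (hΔ : 0 < Δ) (m : ℤ) (x : ℝ) (h1 : 2*m*Δ ≤ x)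
    (h2 : x < 2*m*Δ + 2*Δ) : rmod Δ x = x - 2*m*Δ := by
  have h2Δ : (0:ℝ) < 2*Δ := by linarith
  have hx : x / (2*Δ) = m + (x - 2*m*Δ) / (2*Δ) := by field_simp; ring
  rw [rmod, hx, Int.fract_intCast_add, Int.fract_eq_self.2
    ⟨div_nonneg (by linarith) h2Δ.le, (div_lt_one h2Δ).2 (by linarith)⟩]
  field_simp

lemma rmod_nonneg {Δ : ℝ} (hΔ : 0 < Δ) (x : ℝ) : 0 ≤ rmod Δ x :=
  mul_nonneg (by linarith) (Int.fract_nonneg _)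

lemma rmod_lt {Δ : ℝ} (hΔ : 0 < Δ) (x : ℝ) : rmod Δ x < 2*Δ := by
  have := Int.fract_lt_one (x / (2*Δ))
  calc 2*Δ*Int.fract (x / (2*Δ)) < 2*Δ*1 := mul_lt_mul_of_pos_left this (by linarith)
    _ = 2*Δ := mul_one _

lemma measurable_rmod (Δ : ℝ) : Measurable (rmod Δ) :=
  ((measurable_id.div_const (2*Δ)).fract).const_mul (2*Δ)

lemma measurable_tri (Δ : ℝ) : Measurable (tri Δ) :=
  ((measurable_rmod Δ).sub_const Δ).abs

lemma tri_mem {Δ : ℝ} (hΔ : 0 < Δ) (x : ℝ) : tri Δ x ∈ Set.Icc 0 Δ := by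
  have h1 := rmod_nonneg hΔ x
  have h2 := rmod_lt hΔ x
  constructor
  · exact abs_nonneg _
  · rw [tri, abs_le]; constructor <;> [linarith; linarith]

lemma clamp_mem {Δ : ℝ} (hΔ : 0 ≤ Δ) (y : ℝ) : clamp Δ y ∈ Set.Icc 0 Δ :=
  ⟨le_min hΔ (le_max_left _ _), min_le_left _ _⟩

lemma clamp_eq {Δ y : ℝ} (hy : y ∈ Set.Icc 0 Δ) : clamp Δ y = y := by
  rw [clamp, max_eq_right hy.1, min_eq_right hy.2]

lemma continuous_clamp (Δ : ℝ) : Continuous (clamp Δ) :=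
  continuous_const.min (continuous_const.max continuous_id)

lemma cext_eq {Δ : ℝ} (hΔ : 0 < Δ) (g : ℝ → ℝ) (x : ℝ) : cext g Δ x = g (tri Δ x) := by
  rw [cext, clamp_eq (tri_mem hΔ x)]

lemma cext_bound {Δ : ℝ} (hΔ : 0 < Δ) {g : ℝ → ℝ} {C : ℝ}
    (hC : ∀ y ∈ Set.Icc (0:ℝ) Δ, |g y| ≤ C) (x : ℝ) : |cext g Δ x| ≤ C :=
  hC _ (clamp_mem hΔ.le _)

lemma cext_measurable {Δ : ℝ} (hΔ : 0 < Δ) {g : ℝ → ℝ}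
    (hg : ContinuousOn g (Set.Icc 0 Δ)) : Measurable (cext g Δ) := by
  have hG : Continuous (fun y => g (clamp Δ y)) :=
    hg.comp_continuous (continuous_clamp Δ) (fun y => clamp_mem hΔ.le y)
  exact hG.measurable.comp (measurable_tri Δ)

lemma measurable_sg (Δ : ℝ) : Measurable (sg Δ) := by
  classical
  exact Measurable.ite (measurableSet_lt (measurable_rmod Δ) measurable_const)
    measurable_const measurable_const

lemma sg_abs (Δ x : ℝ) : |sg Δ x| = 1 := by
  rw [sg]; split_ifs <;> simp

lemma tri_even {Δ : ℝ} (hΔ : 0 < Δ) (m : ℤ) (x : ℝ) (h1 : 2*m*Δ ≤ x)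
    (h2 : x ≤ 2*m*Δ + Δ) : tri Δ x = 2*m*Δ + Δ - x := by
  rw [tri, rmod_eq_sub hΔ m x h1 (by linarith), abs_of_nonpos (by linarith)]
  ring

lemma tri_odd {Δ : ℝ} (hΔ : 0 < Δ) (m : ℤ) (x : ℝ) (h1 : 2*m*Δ + Δ ≤ x)
    (h2 : x ≤ 2*m*Δ + 2*Δ) : tri Δ x = x - (2*m*Δ + Δ) := by
  rcases lt_or_eq_of_le h2 with h2' | h2'
  · rw [tri, rmod_eq_sub hΔ m x (by linarith) h2', abs_of_nonneg (by linarith)]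
    ring
  · have : rmod Δ x = 0 := by
      have := rmod_eq_sub hΔ (m+1) x (by push_cast; linarith) (by push_cast; linarith)
      rw [this]; push_cast; linarith
    rw [tri, this, zero_sub, abs_neg, abs_of_pos hΔ]
    linarith

lemma sg_even {Δ : ℝ} (hΔ : 0 < Δ) (m : ℤ) (x : ℝ) (h1 : 2*m*Δ ≤ x)
    (h2 : x < 2*m*Δ + Δ) : sg Δ x = 1 := by
  rw [sg, if_pos]
  rw [rmod_eq_sub hΔ m x h1 (by linarith)]
  linarith

lemma sg_odd {Δ : ℝ} (hΔ : 0 < Δ) (m : ℤ) (x : ℝ) (h1 : 2*m*Δ + Δ ≤ x)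
    (h2 : x < 2*m*Δ + 2*Δ) : sg Δ x = -1 := by
  rw [sg, if_neg]
  rw [rmod_eq_sub hΔ m x (by linarith) h2]
  linarith

lemma rmod_zero {Δ : ℝ} (hΔ : 0 < Δ) : rmod Δ 0 = 0 := by
  have := rmod_eq_sub hΔ 0 0 (by norm_num) (by push_cast; linarith)
  simpa using this

lemma tri_zero {Δ : ℝ} (hΔ : 0 < Δ) : tri Δ 0 = Δ := by
  rw [tri, rmod_zero hΔ, zero_sub, abs_neg, abs_of_pos hΔ]

lemma ftc_step {p : ℕ} (S : Matrix (Fin p) (Fin p) ℝ) (a s : Fin p → ℝ) {Δ : ℝ} (hΔ : 0 < Δ)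
    {g g' : ℝ → ℝ}
    (hderiv : ∀ x ∈ Set.Icc (0 : ℝ) Δ, HasDerivWithinAt g (g' x) (Set.Icc (0 : ℝ) Δ) x)
    (hInt : IntegrableOn
      (fun x => fb S (a ᵥ* S) s x * cext g Δ x - sg Δ x * (fb S a s x * cext g' Δ x))
      (Set.Ici 0))
    (k : ℕ) :
    ∫ x in ((k:ℝ)*Δ)..(((k:ℝ)+1)*Δ),
        (fb S (a ᵥ* S) s x * cext g Δ x - sg Δ x * (fb S a s x * cext g' Δ x))
      = fb S a s (((k:ℝ)+1)*Δ) * cext g Δ (((k:ℝ)+1)*Δ)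
        - fb S a s ((k:ℝ)*Δ) * cext g Δ ((k:ℝ)*Δ) := by
  have hgc : ContinuousOn g (Set.Icc 0 Δ) := fun y hy => (hderiv y hy).continuousWithinAt
  set c : ℝ := (k:ℝ)*Δ with hc
  set d : ℝ := ((k:ℝ)+1)*Δ with hd
  have hc0 : 0 ≤ c := mul_nonneg (Nat.cast_nonneg k) hΔ.le
  have hcd : c ≤ d := by rw [hc, hd]; nlinarith [Nat.cast_nonneg (α := ℝ) k]
  have hIoc : Set.Ioc c d ⊆ Set.Ici (0:ℝ) := fun y hy => le_trans hc0 hy.1.le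
  have hIcd : IntervalIntegrable
      (fun x => fb S (a ᵥ* S) s x * cext g Δ x - sg Δ x * (fb S a s x * cext g' Δ x))
      volume c d := by
    rw [intervalIntegrable_iff_integrableOn_Ioc_of_le hcd]
    exact hInt.mono_set hIoc
  rcases Nat.even_or_odd k with ⟨m, hm⟩ | ⟨m, hm⟩
  · -- even case : k = 2m, tri = d - x on [c, d]
    have hcm : c = 2*(m:ℤ)*Δ := by rw [hc, hm]; push_cast; ring
    have hdm : d = 2*(m:ℤ)*Δ + Δ := by rw [hd, hm]; push_cast; ring
    have htri : ∀ x ∈ Set.Icc c d, tri Δ x = d - x := by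
      intro x hx
      rw [tri_even hΔ m x (by rw [← hcm]; exact hx.1) (by rw [← hdm]; exact hx.2), ← hdm]
    have hmap : ∀ x ∈ Set.Icc c d, d - x ∈ Set.Icc (0:ℝ) Δ := by
      intro x hx
      constructor
      · linarith [hx.2]
      · have : c ≤ x := hx.1
        rw [hdm, hcm] at *
        linarith
    have hHcont : ContinuousOn (fun x => fb S a s x * cext g Δ x) (Set.Icc c d) := by
      refine ContinuousOn.congr (f := fun x => fb S a s x * g (d - x)) ?_ ?_
      · exact ((fb_continuous S a s).continuousOn).mul
          (hgc.comp ((continuous_const.sub continuous_id).continuousOn) hmap)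
      · intro x hx
        simp only [cext_eq hΔ]
        rw [htri x hx]
    have hder : ∀ x ∈ Set.Ioo c d, HasDerivWithinAt (fun x => fb S a s x * cext g Δ x)
        (fb S (a ᵥ* S) s x * cext g Δ x - sg Δ x * (fb S a s x * cext g' Δ x)) (Set.Ioi x) x := by
      intro x hx
      have hdx : d - x ∈ Set.Ioo (0:ℝ) Δ := by
        constructor
        · linarith [hx.2]
        · have := hx.1; rw [hcm] at this; rw [hdm]; linarith
      have hinner : HasDerivAt (fun y : ℝ => d - y) (-1) x := by
        simpa using (hasDerivAt_id x).const_sub d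
      have houter : HasDerivAt g (g' (d - x)) (d - x) :=
        (hderiv (d - x) (Set.Ioo_subset_Icc_self hdx)).hasDerivAt
          (Icc_mem_nhds hdx.1 hdx.2)
      have hcomp : HasDerivAt (fun y => g (d - y)) (g' (d - x) * (-1)) x :=
        HasDerivAt.comp x houter hinner
      have hφ : HasDerivAt (fun y => fb S a s y * g (d - y))
          (fb S (a ᵥ* S) s x * g (d - x) + fb S a s x * (g' (d - x) * (-1))) x :=
        (fbil_hasDerivAt S a s x).mul hcomp
      have hEq : (fun x => fb S a s x * cext g Δ x) =ᶠ[nhds x] (fun y => fb S a s y * g (d - y)) := by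
        refine Filter.eventuallyEq_of_mem (isOpen_Ioo.mem_nhds hx) fun y hy => ?_
        rw [cext_eq hΔ, htri y (Set.Ioo_subset_Icc_self hy)]
      have hHx := hφ.congr_of_eventuallyEq hEq
      have hval : fb S (a ᵥ* S) s x * cext g Δ x - sg Δ x * (fb S a s x * cext g' Δ x)
          = fb S (a ᵥ* S) s x * g (d - x) + fb S a s x * (g' (d - x) * (-1)) := by
        rw [cext_eq hΔ, cext_eq hΔ, htri x (Set.Ioo_subset_Icc_self hx),
          sg_even hΔ m x (by rw [← hcm]; exact hx.1.le) (by rw [← hdm]; exact hx.2)]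
        ring
      rw [hval]
      exact hHx.hasDerivWithinAt
    have := intervalIntegral.integral_eq_sub_of_hasDeriv_right_of_le hcd hHcont hder hIcd
    simpa using this
  · -- odd case : k = 2m+1, tri = x - c on [c, d]
    have hcm : c = 2*(m:ℤ)*Δ + Δ := by rw [hc, hm]; push_cast; ring
    have hdm : d = 2*(m:ℤ)*Δ + 2*Δ := by rw [hd, hm]; push_cast; ring
    have htri : ∀ x ∈ Set.Icc c d, tri Δ x = x - c := by
      intro x hx
      rw [tri_odd hΔ m x (by rw [← hcm]; exact hx.1) (by rw [← hdm]; exact hx.2), ← hcm]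
    have hmap : ∀ x ∈ Set.Icc c d, x - c ∈ Set.Icc (0:ℝ) Δ := by
      intro x hx
      constructor
      · linarith [hx.1]
      · have := hx.2; rw [hdm] at this; rw [hcm]; linarith
    have hHcont : ContinuousOn (fun x => fb S a s x * cext g Δ x) (Set.Icc c d) := by
      refine ContinuousOn.congr (f := fun x => fb S a s x * g (x - c)) ?_ ?_
      · exact ((fb_continuous S a s).continuousOn).mul
          (hgc.comp ((continuous_id.sub continuous_const).continuousOn) hmap)
      · intro x hx
        simp only [cext_eq hΔ]
        rw [htri x hx]
    have hder : ∀ x ∈ Set.Ioo c d, HasDerivWithinAt (fun x => fb S a s x * cext g Δ x)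
        (fb S (a ᵥ* S) s x * cext g Δ x - sg Δ x * (fb S a s x * cext g' Δ x)) (Set.Ioi x) x := by
      intro x hx
      have hdx : x - c ∈ Set.Ioo (0:ℝ) Δ := by
        constructor
        · linarith [hx.1]
        · have := hx.2; rw [hdm] at this; rw [hcm]; linarith
      have hinner : HasDerivAt (fun y : ℝ => y - c) (1) x := by
        simpa using (hasDerivAt_id x).sub_const c
      have houter : HasDerivAt g (g' (x - c)) (x - c) :=
        (hderiv (x - c) (Set.Ioo_subset_Icc_self hdx)).hasDerivAt
          (Icc_mem_nhds hdx.1 hdx.2)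
      have hcomp : HasDerivAt (fun y => g (y - c)) (g' (x - c) * 1) x :=
        HasDerivAt.comp x houter hinner
      have hφ : HasDerivAt (fun y => fb S a s y * g (y - c))
          (fb S (a ᵥ* S) s x * g (x - c) + fb S a s x * (g' (x - c) * 1)) x :=
        (fbil_hasDerivAt S a s x).mul hcomp
      have hEq : (fun x => fb S a s x * cext g Δ x) =ᶠ[nhds x] (fun y => fb S a s y * g (y - c)) := by
        refine Filter.eventuallyEq_of_mem (isOpen_Ioo.mem_nhds hx) fun y hy => ?_
        rw [cext_eq hΔ, htri y (Set.Ioo_subset_Icc_self hy)]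
      have hHx := hφ.congr_of_eventuallyEq hEq
      have hval : fb S (a ᵥ* S) s x * cext g Δ x - sg Δ x * (fb S a s x * cext g' Δ x)
          = fb S (a ᵥ* S) s x * g (x - c) + fb S a s x * (g' (x - c) * 1) := by
        rw [cext_eq hΔ, cext_eq hΔ, htri x (Set.Ioo_subset_Icc_self hx),
          sg_odd hΔ m x (by rw [← hcm]; exact hx.1.le) (by rw [← hdm]; exact hx.2)]
        ring
      rw [hval]
      exact hHx.hasDerivWithinAt
    have := intervalIntegral.integral_eq_sub_of_hasDeriv_right_of_le hcd hHcont hder hIcd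
    simpa using this

/-- integration-by-parts/telescoping identity:
`∫₀^∞ a S e^{Sx} s · g(|x mod 2Δ - Δ|) dx
  = -(a s) g(Δ) + ∫₀^∞ σ(x) · a e^{Sx} s · g'(|x mod 2Δ - Δ|) dx`,
with `σ(x) = 1` if `x mod 2Δ < Δ` and `σ(x) = -1` otherwise; both integrals
converge absolutely. -/
theorem integration_by_parts_telescoping
    (p : ℕ) (hp : 1 ≤ p) (S : Matrix (Fin p) (Fin p) ℝ)
    (hS0 : Filter.Tendsto (fun x : ℝ => mexp S x) Filter.atTop (nhds 0))
    (hSint : IntegrableOn (fun x : ℝ => ‖mexp S x‖) (Set.Ici 0))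
    (a s : Fin p → ℝ) (Δ : ℝ) (hΔ : 0 < Δ)
    (g g' : ℝ → ℝ)
    (hderiv : ∀ x ∈ Set.Icc (0 : ℝ) Δ, HasDerivWithinAt g (g' x) (Set.Icc (0 : ℝ) Δ) x)
    (hg'cont : ContinuousOn g' (Set.Icc (0 : ℝ) Δ))
    (hg'bdd : ∃ C : ℝ, ∀ x ∈ Set.Icc (0 : ℝ) Δ, |g' x| ≤ C) :
    IntegrableOn
      (fun x : ℝ => (((a ᵥ* S) ᵥ* mexp S x) ⬝ᵥ s) * g (|rmod Δ x - Δ|)) (Set.Ici 0)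
    ∧ IntegrableOn
        (fun x : ℝ => (if rmod Δ x < Δ then (1 : ℝ) else -1)
          * (((a ᵥ* mexp S x) ⬝ᵥ s) * g' (|rmod Δ x - Δ|))) (Set.Ici 0)
    ∧ (∫ x in Set.Ici (0 : ℝ), (((a ᵥ* S) ᵥ* mexp S x) ⬝ᵥ s) * g (|rmod Δ x - Δ|))
        = -(a ⬝ᵥ s) * g Δ
          + ∫ x in Set.Ici (0 : ℝ), (if rmod Δ x < Δ then (1 : ℝ) else -1)
              * (((a ᵥ* mexp S x) ⬝ᵥ s) * g' (|rmod Δ x - Δ|)) := by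
  classical
  obtain ⟨Cg', hCg'⟩ := hg'bdd
  have hgc : ContinuousOn g (Set.Icc 0 Δ) := fun y hy => (hderiv y hy).continuousWithinAt
  obtain ⟨Cg, hCg⟩ := isCompact_Icc.exists_bound_of_continuousOn hgc
  have hCgabs : ∀ y ∈ Set.Icc (0:ℝ) Δ, |g y| ≤ Cg := fun y hy => by
    simpa [Real.norm_eq_abs] using hCg y hy
  have hA : (fun x : ℝ => (((a ᵥ* S) ᵥ* mexp S x) ⬝ᵥ s) * g (|rmod Δ x - Δ|))
      = fun x => fb S (a ᵥ* S) s x * cext g Δ x := by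
    funext x; rw [cext_eq hΔ]; rfl
  have hB : (fun x : ℝ => (if rmod Δ x < Δ then (1 : ℝ) else -1)
        * (((a ᵥ* mexp S x) ⬝ᵥ s) * g' (|rmod Δ x - Δ|)))
      = fun x => sg Δ x * (fb S a s x * cext g' Δ x) := by
    funext x; rw [cext_eq hΔ]; rfl
  have hInt1 : IntegrableOn (fun x => fb S (a ᵥ* S) s x * cext g Δ x) (Set.Ici 0) := by
    refine Integrable.mono'
      (hSint.const_mul ((∑ i, |(a ᵥ* S) i|) * (∑ j, |s j|) * Cg)) ?_
      (Filter.Eventually.of_forall fun x => ?_)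
    · exact ((fb_continuous S (a ᵥ* S) s).aestronglyMeasurable).mul
        ((cext_measurable hΔ hgc).aestronglyMeasurable)
    · rw [Real.norm_eq_abs, abs_mul]
      calc |fb S (a ᵥ* S) s x| * |cext g Δ x|
          ≤ ((∑ i, |(a ᵥ* S) i|) * (∑ j, |s j|) * ‖mexp S x‖) * Cg :=
            mul_le_mul (fb_bound S (a ᵥ* S) s x) (cext_bound hΔ hCgabs x)
              (abs_nonneg _) (by positivity)
        _ = (∑ i, |(a ᵥ* S) i|) * (∑ j, |s j|) * Cg * ‖mexp S x‖ := by ring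
  have hInt2 : IntegrableOn (fun x => sg Δ x * (fb S a s x * cext g' Δ x)) (Set.Ici 0) := by
    refine Integrable.mono'
      (hSint.const_mul ((∑ i, |a i|) * (∑ j, |s j|) * Cg')) ?_
      (Filter.Eventually.of_forall fun x => ?_)
    · exact ((measurable_sg Δ).aestronglyMeasurable).mul
        (((fb_continuous S a s).measurable.mul (cext_measurable hΔ hg'cont)).aestronglyMeasurable)
    · rw [Real.norm_eq_abs, abs_mul, sg_abs, one_mul, abs_mul]
      calc |fb S a s x| * |cext g' Δ x|
          ≤ ((∑ i, |a i|) * (∑ j, |s j|) * ‖mexp S x‖) * Cg' :=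
            mul_le_mul (fb_bound S a s x) (cext_bound hΔ hCg' x)
              (abs_nonneg _) (by positivity)
        _ = (∑ i, |a i|) * (∑ j, |s j|) * Cg' * ‖mexp S x‖ := by ring
  have hIntD : IntegrableOn
      (fun x => fb S (a ᵥ* S) s x * cext g Δ x - sg Δ x * (fb S a s x * cext g' Δ x))
      (Set.Ici 0) := hInt1.sub hInt2
  refine ⟨by rw [hA]; exact hInt1, by rw [hB]; exact hInt2, ?_⟩
  rw [hA, hB, integral_Ici_eq_integral_Ioi, integral_Ici_eq_integral_Ioi]
  have hIA : IntegrableOn (fun x => fb S (a ᵥ* S) s x * cext g Δ x) (Set.Ioi 0) :=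
    hInt1.mono_set Set.Ioi_subset_Ici_self
  have hIB : IntegrableOn (fun x => sg Δ x * (fb S a s x * cext g' Δ x)) (Set.Ioi 0) :=
    hInt2.mono_set Set.Ioi_subset_Ici_self
  have htend : Filter.Tendsto (fun n : ℕ => (n:ℝ)*Δ) Filter.atTop Filter.atTop :=
    tendsto_natCast_atTop_atTop.atTop_mul_const hΔ
  have hlim1 := intervalIntegral_tendsto_integral_Ioi 0 (hIA.sub hIB) htend
  have tel : ∀ n : ℕ, (∫ x in (0:ℝ)..((n:ℝ)*Δ),
        (fb S (a ᵥ* S) s x * cext g Δ x - sg Δ x * (fb S a s x * cext g' Δ x)))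
      = fb S a s ((n:ℝ)*Δ) * cext g Δ ((n:ℝ)*Δ) - fb S a s 0 * cext g Δ 0 := by
    intro n
    induction n with
    | zero => simp
    | succ n ih =>
      have key := ftc_step S a s hΔ hderiv hIntD n
      have h01 : IntervalIntegrable
          (fun x => fb S (a ᵥ* S) s x * cext g Δ x - sg Δ x * (fb S a s x * cext g' Δ x))
          volume 0 ((n:ℝ)*Δ) := by
        rw [intervalIntegrable_iff_integrableOn_Ioc_of_le (by positivity)]
        exact hIntD.mono_set (fun y hy => hy.1.le)
      have h12 : IntervalIntegrable
          (fun x => fb S (a ᵥ* S) s x * cext g Δ x - sg Δ x * (fb S a s x * cext g' Δ x))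
          volume ((n:ℝ)*Δ) (((n:ℝ)+1)*Δ) := by
        rw [intervalIntegrable_iff_integrableOn_Ioc_of_le
          (by nlinarith [Nat.cast_nonneg (α := ℝ) n])]
        refine hIntD.mono_set (fun y hy => ?_)
        have h0n : (0:ℝ) ≤ (n:ℝ)*Δ := by positivity
        exact le_trans h0n hy.1.le
      push_cast
      rw [← intervalIntegral.integral_add_adjacent_intervals h01 h12, ih, key]
      ring
  have hH0 : fb S a s 0 * cext g Δ 0 = (a ⬝ᵥ s) * g Δ := by
    rw [fb_zero, cext_eq hΔ, tri_zero hΔ]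
  have hnorm0 : Filter.Tendsto (fun n : ℕ => ‖mexp S ((n:ℝ)*Δ)‖) Filter.atTop (nhds 0) := by
    have := (hS0.comp htend).norm
    simpa using this
  have hH : Filter.Tendsto (fun n : ℕ => fb S a s ((n:ℝ)*Δ) * cext g Δ ((n:ℝ)*Δ))
      Filter.atTop (nhds 0) := by
    apply squeeze_zero_norm
      (a := fun n : ℕ => (∑ i, |a i|) * (∑ j, |s j|) * Cg * ‖mexp S ((n:ℝ)*Δ)‖)
    · intro n
      rw [Real.norm_eq_abs, abs_mul]
      calc |fb S a s ((n:ℝ)*Δ)| * |cext g Δ ((n:ℝ)*Δ)|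
          ≤ ((∑ i, |a i|) * (∑ j, |s j|) * ‖mexp S ((n:ℝ)*Δ)‖) * Cg :=
            mul_le_mul (fb_bound S a s _) (cext_bound hΔ hCgabs _)
              (abs_nonneg _) (by positivity)
        _ = (∑ i, |a i|) * (∑ j, |s j|) * Cg * ‖mexp S ((n:ℝ)*Δ)‖ := by ring
    · have := hnorm0.const_mul ((∑ i, |a i|) * (∑ j, |s j|) * Cg)
      simpa using this
  have hlim2 : Filter.Tendsto
      (fun n : ℕ => fb S a s ((n:ℝ)*Δ) * cext g Δ ((n:ℝ)*Δ) - fb S a s 0 * cext g Δ 0)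
      Filter.atTop (nhds (0 - fb S a s 0 * cext g Δ 0)) := hH.sub_const _
  have hkey : (∫ x in Set.Ioi (0:ℝ),
        (fb S (a ᵥ* S) s x * cext g Δ x - sg Δ x * (fb S a s x * cext g' Δ x)))
      = 0 - fb S a s 0 * cext g Δ 0 :=
    tendsto_nhds_unique ((Filter.tendsto_congr tel).1 hlim1) hlim2
  have h4 : (∫ x in Set.Ioi (0:ℝ), fb S (a ᵥ* S) s x * cext g Δ x)
      = (∫ x in Set.Ioi (0:ℝ),
          (fb S (a ᵥ* S) s x * cext g Δ x - sg Δ x * (fb S a s x * cext g' Δ x)))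
        + ∫ x in Set.Ioi (0:ℝ), sg Δ x * (fb S a s x * cext g' Δ x) := by
    rw [integral_sub hIA hIB]; ring
  rw [h4, hkey, hH0]
  ring
end

section
/- (D preserves valid matrix-exponential representations.) Let ε ∈ (0, Δ), suppose α e^{Sx} s ≥ 0 and α e^{Sx} e > 0 for all x ≥ 0, and define D := ∫_0^{Δ−ε} e^{Sy} s · (α e^{Sy} / (α e^{Sy} e)) dy + (∫_{Δ−ε}^∞ e^{Sy} s dy) · (α e^{S(Δ−ε)} / (α e^{S(Δ−ε)} e)). Let a be any 1×p real row vector with a e^{Sx} s ≥ 0 for all x ≥ 0 and a e = 1. Then (a D) e^{Sx} s ≥ 0 for all x ≥ 0 and (a D) e = 1. -/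
open MeasureTheory Matrix

attribute [local instance] Matrix.normedAddCommGroup Matrix.normedSpace

variable {p : ℕ} (S : Matrix (Fin p) (Fin p) ℝ)

lemma mexp_add (x y : ℝ) : mexp S (x + y) = mexp S x * mexp S y := by
  rw [mexp, add_smul]
  exact Matrix.exp_add_of_commute (𝔸 := ℝ) (m := Fin p) _ _
    ((Commute.refl S).smul_left x |>.smul_right y)

lemma dot_abs_le (u v : Fin p → ℝ) (M : Matrix (Fin p) (Fin p) ℝ) :
    |u ⬝ᵥ (M *ᵥ v)| ≤ ((∑ i, |u i|) * (∑ j, |v j|)) * ‖M‖ := by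
  have h1 : ∀ i, |(M *ᵥ v) i| ≤ (∑ j, |v j|) * ‖M‖ := by
    intro i
    calc |(M *ᵥ v) i| = |∑ j, M i j * v j| := by rw [Matrix.mulVec, dotProduct]
      _ ≤ ∑ j, |M i j * v j| := Finset.abs_sum_le_sum_abs _ _
      _ ≤ ∑ j, ‖M‖ * |v j| := Finset.sum_le_sum fun j _ => by
            rw [abs_mul]
            exact mul_le_mul_of_nonneg_right
              (Matrix.norm_entry_le_entrywise_sup_norm M) (abs_nonneg _)
      _ = (∑ j, |v j|) * ‖M‖ := by rw [← Finset.mul_sum, mul_comm]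
  calc |u ⬝ᵥ (M *ᵥ v)| = |∑ i, u i * (M *ᵥ v) i| := by rw [dotProduct]
    _ ≤ ∑ i, |u i * (M *ᵥ v) i| := Finset.abs_sum_le_sum_abs _ _
    _ ≤ ∑ i, |u i| * ((∑ j, |v j|) * ‖M‖) := Finset.sum_le_sum fun i _ => by
          rw [abs_mul]
          exact mul_le_mul_of_nonneg_left (h1 i) (abs_nonneg _)
    _ = ((∑ i, |u i|) * (∑ j, |v j|)) * ‖M‖ := by rw [← Finset.sum_mul, mul_assoc]

lemma mexp_entry_deriv (u v : Fin p → ℝ) (y : ℝ) :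
    HasDerivAt (fun t => u ⬝ᵥ (mexp S t *ᵥ v)) (u ⬝ᵥ (mexp S y *ᵥ (S *ᵥ v))) y := by
  letI : NormedAddCommGroup (Matrix (Fin p) (Fin p) ℝ) := Matrix.linftyOpNormedAddCommGroup
  letI : NormedSpace ℝ (Matrix (Fin p) (Fin p) ℝ) := Matrix.linftyOpNormedSpace
  letI : NormedRing (Matrix (Fin p) (Fin p) ℝ) := Matrix.linftyOpNormedRing
  letI : NormedAlgebra ℝ (Matrix (Fin p) (Fin p) ℝ) := Matrix.linftyOpNormedAlgebra
  have h := hasDerivAt_exp_smul_const (𝕂 := ℝ) S y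
  let lin : Matrix (Fin p) (Fin p) ℝ →ₗ[ℝ] ℝ :=
    { toFun := fun M => u ⬝ᵥ (M *ᵥ v)
      map_add' := by intro A B; simp [Matrix.add_mulVec]
      map_smul' := by intro c A; simp [Matrix.smul_mulVec] }
  have := (LinearMap.toContinuousLinearMap lin).hasFDerivAt.comp_hasDerivAt y h
  have e : u ⬝ᵥ (mexp S y *ᵥ (S *ᵥ v))
      = (LinearMap.toContinuousLinearMap lin) (NormedSpace.exp (y • S) * S) := by
    show _ = u ⬝ᵥ ((NormedSpace.exp (y • S) * S) *ᵥ v)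
    rw [Matrix.mulVec_mulVec]; rfl
  rw [e]; exact this

lemma mexp_cont (u v : Fin p → ℝ) :
    Continuous (fun t => u ⬝ᵥ (mexp S t *ᵥ v)) :=
  continuous_iff_continuousAt.2 fun t => (mexp_entry_deriv S u v t).continuousAt

lemma mexp_dot_integrableOn
    (hSint : IntegrableOn (fun x : ℝ => ‖mexp S x‖) (Set.Ici 0))
    (u v : Fin p → ℝ) :
    IntegrableOn (fun y => u ⬝ᵥ (mexp S y *ᵥ v)) (Set.Ici (0:ℝ)) := by
  have hg : IntegrableOn
      (fun y : ℝ => ((∑ i, |u i|) * (∑ j, |v j|)) * ‖mexp S y‖) (Set.Ici 0) :=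
    hSint.const_mul _
  refine Integrable.mono' hg ((mexp_cont S u v).aestronglyMeasurable.restrict)
    (ae_of_all _ fun y => ?_)
  simpa [Real.norm_eq_abs] using dot_abs_le u v (mexp S y)

lemma mexp_dot_tendsto
    (hS0 : Filter.Tendsto (fun x : ℝ => mexp S x) Filter.atTop (nhds 0))
    (u v : Fin p → ℝ) :
    Filter.Tendsto (fun y => u ⬝ᵥ (mexp S y *ᵥ v)) Filter.atTop (nhds 0) := by
  have hnorm : Filter.Tendsto
      (fun y => ((∑ i, |u i|) * (∑ j, |v j|)) * ‖mexp S y‖) Filter.atTop (nhds 0) := by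
    simpa using (hS0.norm.const_mul ((∑ i, |u i|) * (∑ j, |v j|)))
  refine squeeze_zero_norm (fun y => ?_) hnorm
  simpa [Real.norm_eq_abs] using dot_abs_le u v (mexp S y)

lemma mexp_integral_Ioi
    (hS0 : Filter.Tendsto (fun x : ℝ => mexp S x) Filter.atTop (nhds 0))
    (hSint : IntegrableOn (fun x : ℝ => ‖mexp S x‖) (Set.Ici 0))
    (u v : Fin p → ℝ) :
    ∫ y in Set.Ioi (0:ℝ), u ⬝ᵥ (mexp S y *ᵥ (S *ᵥ v)) = -(u ⬝ᵥ v) := by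
  have := integral_Ioi_of_hasDerivAt_of_tendsto'
    (f := fun t => u ⬝ᵥ (mexp S t *ᵥ v))
    (f' := fun t => u ⬝ᵥ (mexp S t *ᵥ (S *ᵥ v)))
    (a := 0)
    (fun x _ => mexp_entry_deriv S u v x)
    ((mexp_dot_integrableOn S hSint u (S *ᵥ v)).mono_set Set.Ioi_subset_Ici_self)
    (mexp_dot_tendsto S hS0 u v)
  rw [this]
  simp [mexp, NormedSpace.exp_zero]

/-- The matrix `D = ∫₀^{Δ-ε} e^{Sy} s (α e^{Sy}/(α e^{Sy} e)) dy
  + (∫_{Δ-ε}^∞ e^{Sy} s dy)(α e^{S(Δ-ε)}/(α e^{S(Δ-ε)} e))`,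
where `e` is the all-ones vector and `s = -S e`. -/
noncomputable def Dmat {p : ℕ} (S : Matrix (Fin p) (Fin p) ℝ) (α : Fin p → ℝ)
    (Δ ε : ℝ) : Matrix (Fin p) (Fin p) ℝ :=
  Matrix.of fun i j =>
    (∫ y in Set.Ioc (0 : ℝ) (Δ - ε),
        (mexp S y *ᵥ -(S *ᵥ fun _ => (1 : ℝ))) i
          * ((α ᵥ* mexp S y) j / ((α ᵥ* mexp S y) ⬝ᵥ fun _ => (1 : ℝ))))
    + (∫ y in Set.Ioi (Δ - ε), (mexp S y *ᵥ -(S *ᵥ fun _ => (1 : ℝ))) i)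
        * ((α ᵥ* mexp S (Δ - ε)) j / ((α ᵥ* mexp S (Δ - ε)) ⬝ᵥ fun _ => (1 : ℝ)))

lemma single_dot (i : Fin p) (x : Fin p → ℝ) : Pi.single i (1:ℝ) ⬝ᵥ x = x i := by
  simp

lemma vecMul_apply_dot (M : Matrix (Fin p) (Fin p) ℝ) (α : Fin p → ℝ) (j : Fin p) :
    α ⬝ᵥ (M *ᵥ Pi.single j 1) = (α ᵥ* M) j := by
  simp [Matrix.mulVec_single, Matrix.vecMul, dotProduct]

lemma aD_dot (α : Fin p → ℝ) (Δ ε : ℝ)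
    (hSint : IntegrableOn (fun x : ℝ => ‖mexp S x‖) (Set.Ici 0))
    (hαpos : ∀ x : ℝ, 0 ≤ x → 0 < (α ᵥ* mexp S x) ⬝ᵥ (fun _ => (1 : ℝ)))
    (hT : 0 < Δ - ε) (a w : Fin p → ℝ) :
    (a ᵥ* Dmat S α Δ ε) ⬝ᵥ w =
      (∫ y in Set.Ioc (0:ℝ) (Δ - ε),
          (a ⬝ᵥ (mexp S y *ᵥ -(S *ᵥ fun _ => (1 : ℝ)))) *
            ((α ᵥ* mexp S y) ⬝ᵥ w / ((α ᵥ* mexp S y) ⬝ᵥ fun _ => (1 : ℝ))))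
      + (∫ y in Set.Ioi (Δ - ε), a ⬝ᵥ (mexp S y *ᵥ -(S *ᵥ fun _ => (1 : ℝ)))) *
          ((α ᵥ* mexp S (Δ - ε)) ⬝ᵥ w / ((α ᵥ* mexp S (Δ - ε)) ⬝ᵥ fun _ => (1 : ℝ))) := by
  set T := Δ - ε with hTdef
  set s : Fin p → ℝ := -(S *ᵥ fun _ => (1 : ℝ)) with hs
  set d : ℝ → ℝ := fun y => (α ᵥ* mexp S y) ⬝ᵥ fun _ => (1 : ℝ) with hd
  set g : ℝ → Fin p → ℝ := fun y j => (α ᵥ* mexp S y) j / d y with hg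
  -- continuity facts
  have c1 : ∀ i, Continuous fun y => (mexp S y *ᵥ s) i := by
    intro i
    have := mexp_cont S (Pi.single i 1) s
    simpa only [single_dot] using this
  have c2 : ∀ j, Continuous fun y => (α ᵥ* mexp S y) j := by
    intro j
    have := mexp_cont S α (Pi.single j 1)
    simpa only [vecMul_apply_dot] using this
  have c3 : Continuous d := by
    have := mexp_cont S α (fun _ => (1:ℝ))
    simpa only [Matrix.dotProduct_mulVec] using this
  have cf : Continuous fun y => a ⬝ᵥ (mexp S y *ᵥ s) := mexp_cont S a s
  have hd0 : ∀ y ∈ Set.Icc (0:ℝ) T, d y ≠ 0 := fun y hy => (hαpos y hy.1).ne'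
  have cg : ∀ j, ContinuousOn (fun y => g y j) (Set.Icc (0:ℝ) T) := fun j =>
    ((c2 j).continuousOn).div (c3.continuousOn) hd0
  -- integrability facts
  have hIoc : ∀ i j, IntegrableOn (fun y => (mexp S y *ᵥ s) i * g y j)
      (Set.Ioc (0:ℝ) T) := fun i j =>
    ((((c1 i).continuousOn).mul (cg j)).integrableOn_Icc).mono_set Set.Ioc_subset_Icc_self
  have hfg : ∀ j, IntegrableOn (fun y => (a ⬝ᵥ (mexp S y *ᵥ s)) * g y j)
      (Set.Ioc (0:ℝ) T) := fun j =>
    (((cf.continuousOn).mul (cg j)).integrableOn_Icc).mono_set Set.Ioc_subset_Icc_self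
  have hIoi : ∀ i, IntegrableOn (fun y => (mexp S y *ᵥ s) i) (Set.Ioi T) := by
    intro i
    have := (mexp_dot_integrableOn S hSint (Pi.single i 1) s).mono_set
      (Set.Ioi_subset_Ici hT.le)
    simpa only [single_dot] using this
  -- step 1 : row entries of a ᵥ* D
  have h1 : ∀ j, (∑ i, a i * ∫ y in Set.Ioc (0:ℝ) T, (mexp S y *ᵥ s) i * g y j)
      = ∫ y in Set.Ioc (0:ℝ) T, (a ⬝ᵥ (mexp S y *ᵥ s)) * g y j := by
    intro j
    calc ∑ i, a i * ∫ y in Set.Ioc (0:ℝ) T, (mexp S y *ᵥ s) i * g y j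
        = ∑ i, ∫ y in Set.Ioc (0:ℝ) T, a i * ((mexp S y *ᵥ s) i * g y j) :=
          Finset.sum_congr rfl fun i _ => (integral_const_mul _ _).symm
      _ = ∫ y in Set.Ioc (0:ℝ) T, ∑ i, a i * ((mexp S y *ᵥ s) i * g y j) :=
          (integral_finset_sum _ fun i _ => ((hIoc i j).const_mul _)).symm
      _ = ∫ y in Set.Ioc (0:ℝ) T, (a ⬝ᵥ (mexp S y *ᵥ s)) * g y j := by
          congr 1; funext y
          rw [dotProduct, Finset.sum_mul]
          exact Finset.sum_congr rfl fun i _ => by ring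
  have h2 : (∑ i, a i * ∫ y in Set.Ioi T, (mexp S y *ᵥ s) i)
      = ∫ y in Set.Ioi T, a ⬝ᵥ (mexp S y *ᵥ s) := by
    calc ∑ i, a i * ∫ y in Set.Ioi T, (mexp S y *ᵥ s) i
        = ∑ i, ∫ y in Set.Ioi T, a i * (mexp S y *ᵥ s) i :=
          Finset.sum_congr rfl fun i _ => (integral_const_mul _ _).symm
      _ = ∫ y in Set.Ioi T, ∑ i, a i * (mexp S y *ᵥ s) i :=
          (integral_finset_sum _ fun i _ => ((hIoi i).const_mul _)).symm
      _ = ∫ y in Set.Ioi T, a ⬝ᵥ (mexp S y *ᵥ s) := by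
          congr 1
  -- pointwise sums
  have pw : ∀ (f0 : ℝ) (y : ℝ),
      ∑ j, (f0 * g y j) * w j = f0 * ((α ᵥ* mexp S y) ⬝ᵥ w / d y) := by
    intro f0 y
    simp only [hg, dotProduct, Finset.sum_div, Finset.mul_sum]
    exact Finset.sum_congr rfl fun j _ => by ring
  have pw1 : ∀ y : ℝ, ∑ j, g y j * w j = (α ᵥ* mexp S y) ⬝ᵥ w / d y := by
    intro y
    have := pw 1 y
    simpa using this
  -- expand
  calc (a ᵥ* Dmat S α Δ ε) ⬝ᵥ w
      = ∑ j, (∑ i, a i * Dmat S α Δ ε i j) * w j := by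
        simp [dotProduct, Matrix.vecMul]
    _ = ∑ j, ((∫ y in Set.Ioc (0:ℝ) T, (a ⬝ᵥ (mexp S y *ᵥ s)) * g y j)
          + (∫ y in Set.Ioi T, a ⬝ᵥ (mexp S y *ᵥ s)) * g T j) * w j := by
        refine Finset.sum_congr rfl fun j _ => ?_
        have hrow : (∑ i, a i * Dmat S α Δ ε i j)
            = (∫ y in Set.Ioc (0:ℝ) T, (a ⬝ᵥ (mexp S y *ᵥ s)) * g y j)
              + (∫ y in Set.Ioi T, a ⬝ᵥ (mexp S y *ᵥ s)) * g T j := by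
          have hD : ∀ i, Dmat S α Δ ε i j
              = (∫ y in Set.Ioc (0:ℝ) T, (mexp S y *ᵥ s) i * g y j)
                + (∫ y in Set.Ioi T, (mexp S y *ᵥ s) i) * g T j := fun i => rfl
          have e1 : (∑ i, a i * Dmat S α Δ ε i j)
              = (∑ i, a i * ∫ y in Set.Ioc (0:ℝ) T, (mexp S y *ᵥ s) i * g y j)
                + (∑ i, a i * ∫ y in Set.Ioi T, (mexp S y *ᵥ s) i) * g T j := by
            rw [Finset.sum_mul, ← Finset.sum_add_distrib]
            exact Finset.sum_congr rfl fun i _ => by rw [hD i]; ring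
          rw [e1, h1 j, h2]
        rw [hrow]
    _ = (∑ j, (∫ y in Set.Ioc (0:ℝ) T, (a ⬝ᵥ (mexp S y *ᵥ s)) * g y j) * w j)
        + (∫ y in Set.Ioi T, a ⬝ᵥ (mexp S y *ᵥ s)) * ∑ j, g T j * w j := by
        rw [Finset.mul_sum, ← Finset.sum_add_distrib]
        exact Finset.sum_congr rfl fun j _ => by ring
    _ = (∫ y in Set.Ioc (0:ℝ) T,
          (a ⬝ᵥ (mexp S y *ᵥ s)) * ((α ᵥ* mexp S y) ⬝ᵥ w / d y))
        + (∫ y in Set.Ioi T, a ⬝ᵥ (mexp S y *ᵥ s)) *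
            ((α ᵥ* mexp S T) ⬝ᵥ w / d T) := by
        rw [pw1 T]
        congr 1
        calc ∑ j, (∫ y in Set.Ioc (0:ℝ) T, (a ⬝ᵥ (mexp S y *ᵥ s)) * g y j) * w j
            = ∑ j, ∫ y in Set.Ioc (0:ℝ) T, ((a ⬝ᵥ (mexp S y *ᵥ s)) * g y j) * w j :=
              Finset.sum_congr rfl fun j _ => (integral_mul_const _ _).symm
          _ = ∫ y in Set.Ioc (0:ℝ) T, ∑ j, ((a ⬝ᵥ (mexp S y *ᵥ s)) * g y j) * w j :=
              (integral_finset_sum _ fun j _ => ((hfg j).mul_const _)).symm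
          _ = ∫ y in Set.Ioc (0:ℝ) T,
                (a ⬝ᵥ (mexp S y *ᵥ s)) * ((α ᵥ* mexp S y) ⬝ᵥ w / d y) := by
              congr 1; funext y; exact pw _ y

/-- `D` preserves valid matrix-exponential representations:
if `a e^{Sx} s ≥ 0` for all `x ≥ 0` and `a e = 1`, then the same holds for `a D`. -/
theorem Dmat_preserves_ME_representations
    (p : ℕ) (hp : 1 ≤ p) (S : Matrix (Fin p) (Fin p) ℝ)
    (hS0 : Filter.Tendsto (fun x : ℝ => mexp S x) Filter.atTop (nhds 0))
    (hSint : IntegrableOn (fun x : ℝ => ‖mexp S x‖) (Set.Ici 0))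
    (α : Fin p → ℝ) (Δ ε : ℝ) (hΔ : 0 < Δ) (hε : ε ∈ Set.Ioo 0 Δ)
    (hαnn : ∀ x : ℝ, 0 ≤ x →
      0 ≤ (α ᵥ* mexp S x) ⬝ᵥ -(S *ᵥ fun _ => (1 : ℝ)))
    (hαpos : ∀ x : ℝ, 0 ≤ x → 0 < (α ᵥ* mexp S x) ⬝ᵥ (fun _ => (1 : ℝ)))
    (a : Fin p → ℝ)
    (hann : ∀ x : ℝ, 0 ≤ x →
      0 ≤ (a ᵥ* mexp S x) ⬝ᵥ -(S *ᵥ fun _ => (1 : ℝ)))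
    (hae : a ⬝ᵥ (fun _ => (1 : ℝ)) = 1) :
    (∀ x : ℝ, 0 ≤ x →
      0 ≤ ((a ᵥ* Dmat S α Δ ε) ᵥ* mexp S x) ⬝ᵥ -(S *ᵥ fun _ => (1 : ℝ)))
    ∧ (a ᵥ* Dmat S α Δ ε) ⬝ᵥ (fun _ => (1 : ℝ)) = 1 := by
  obtain ⟨hε0, hεΔ⟩ := hε
  have hT : 0 < Δ - ε := sub_pos.2 hεΔ
  have hann' : ∀ x : ℝ, 0 ≤ x →
      0 ≤ a ⬝ᵥ (mexp S x *ᵥ -(S *ᵥ fun _ => (1:ℝ))) := fun x hx => by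
    rw [Matrix.dotProduct_mulVec]; exact hann x hx
  have key := aD_dot S α Δ ε hSint hαpos hT a
  have hfInt : IntegrableOn
      (fun y => a ⬝ᵥ (mexp S y *ᵥ -(S *ᵥ fun _ => (1:ℝ)))) (Set.Ici (0:ℝ)) :=
    mexp_dot_integrableOn S hSint a _
  have hfIoc : IntegrableOn
      (fun y => a ⬝ᵥ (mexp S y *ᵥ -(S *ᵥ fun _ => (1:ℝ)))) (Set.Ioc (0:ℝ) (Δ - ε)) :=
    hfInt.mono_set fun y hy => le_of_lt hy.1
  have hfIoi : IntegrableOn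
      (fun y => a ⬝ᵥ (mexp S y *ᵥ -(S *ᵥ fun _ => (1:ℝ)))) (Set.Ioi (Δ - ε)) :=
    hfInt.mono_set fun y hy => le_of_lt (hT.trans hy)
  constructor
  · intro x hx
    rw [← Matrix.dotProduct_mulVec, key (mexp S x *ᵥ -(S *ᵥ fun _ => (1:ℝ)))]
    have hnum : ∀ y : ℝ, 0 ≤ y →
        0 ≤ (α ᵥ* mexp S y) ⬝ᵥ (mexp S x *ᵥ -(S *ᵥ fun _ => (1:ℝ))) := by
      intro y hy
      rw [Matrix.dotProduct_mulVec, Matrix.vecMul_vecMul, ← mexp_add]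
      exact hαnn (y + x) (add_nonneg hy hx)
    refine add_nonneg ?_ ?_
    · refine setIntegral_nonneg measurableSet_Ioc fun y hy => ?_
      exact mul_nonneg (hann' y hy.1.le)
        (div_nonneg (hnum y hy.1.le) (hαpos y hy.1.le).le)
    · refine mul_nonneg
        (setIntegral_nonneg measurableSet_Ioi fun y hy => hann' y (hT.le.trans (le_of_lt hy))) ?_
      exact div_nonneg (hnum _ hT.le) (hαpos _ hT.le).le
  · rw [key (fun _ => (1:ℝ)), div_self (hαpos _ hT.le).ne', mul_one]
    have hIocEq : (∫ y in Set.Ioc (0:ℝ) (Δ - ε),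
          (a ⬝ᵥ (mexp S y *ᵥ -(S *ᵥ fun _ => (1:ℝ)))) *
            ((α ᵥ* mexp S y) ⬝ᵥ (fun _ => (1:ℝ)) / ((α ᵥ* mexp S y) ⬝ᵥ fun _ => (1:ℝ))))
        = ∫ y in Set.Ioc (0:ℝ) (Δ - ε), a ⬝ᵥ (mexp S y *ᵥ -(S *ᵥ fun _ => (1:ℝ))) :=
      setIntegral_congr_fun measurableSet_Ioc fun y hy => by
        rw [div_self (hαpos y hy.1.le).ne', mul_one]
    rw [hIocEq, ← setIntegral_union (Set.Ioc_disjoint_Ioi le_rfl) measurableSet_Ioi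
      hfIoc hfIoi, Set.Ioc_union_Ioi_eq_Ioi hT.le]
    have hneg : (fun y => a ⬝ᵥ (mexp S y *ᵥ -(S *ᵥ fun _ => (1:ℝ))))
        = fun y => -(a ⬝ᵥ (mexp S y *ᵥ (S *ᵥ fun _ => (1:ℝ)))) := by
      funext y; simp [Matrix.mulVec_neg]
    rw [hneg, integral_neg, mexp_integral_Ioi S hS0 hSint a (fun _ => (1:ℝ)), neg_neg, hae]
end
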